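/- Let (x^k)_{k ≥ −1} be a cDCA sequence, and assume h is differentiable with ∇h being L_h-Lipschitz continuous on the convex hull of {x^k : k ≥ −1}. Then for every k ≥ 0 there exists ξ^{k+1} ∈ ∂g(x^{k+1}) such that the vector w^{k+1} := ∇f(x^{k+1}) + ξ^{k+1} − ∇h(x^{k+1}) satisfies ‖w^{k+1}‖ ≤ ((1 − μλ)δ/μ)‖x^k − x^{k−1}‖ + (λ + L_h)‖x^{k+1} − x^k‖. -/

import Mathlib

open Set Filter Topology
open scoped InnerProductSpace

noncomputable section

abbrev Euc (n : ℕ) := EuclideanSpace ℝ (Fin n)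

/-- The subdifferential of an extended-real-valued function `g` at `u`. -/
def SubdiffE {n : ℕ} (g : Euc n → EReal) (u : Euc n) : Set (Euc n) :=
  {ξ | ∀ z, g u + ((⟪ξ, z - u⟫_ℝ : ℝ) : EReal) ≤ g z}

/-- The subdifferential of a real-valued function `h` at `u`. -/
def SubdiffR {n : ℕ} (h : Euc n → ℝ) (u : Euc n) : Set (Euc n) :=
  {ξ | ∀ z, h u + ⟪ξ, z - u⟫_ℝ ≤ h z}

/-- Convexity for extended-real-valued functions. -/
def ConvexEReal {n : ℕ} (g : Euc n → EReal) : Prop :=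
  ∀ x y : Euc n, ∀ a b : ℝ, 0 ≤ a → 0 ≤ b → a + b = 1 →
    g (a • x + b • y) ≤ (a : EReal) * g x + (b : EReal) * g y

/-- `g` is proper: nowhere `⊥` and somewhere finite. -/
def ProperE {n : ℕ} (g : Euc n → EReal) : Prop :=
  (∀ x, g x ≠ ⊥) ∧ ∃ x, g x ≠ ⊤

/-- `P` is the proximal mapping of `g`: for every `α > 0` and every `x`, `P α x` is
the unique minimizer over `ℝⁿ` of `y ↦ g y + (1/(2α)) ‖x - y‖²`. -/
def IsProx {n : ℕ} (g : Euc n → EReal) (P : ℝ → Euc n → Euc n) : Prop :=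
  ∀ α : ℝ, 0 < α → ∀ x p, P α x = p ↔
    (∀ y, g p + ((1/(2*α) * ‖x - p‖^2 : ℝ) : EReal) ≤ g y + ((1/(2*α) * ‖x - y‖^2 : ℝ) : EReal))

/-- A cDCA sequence, indexed so that `x 0 = x⁻¹` and `x (k+1) = xᵏ` for `k ≥ 0`:
for every `k ≥ 0` there exist `ηᵏ ∈ ∂h(xᵏ)` and `yᵏ` with
`x^{k+1} = Prox_{μg}((1-μλ)yᵏ - μ∇f(yᵏ) + μλxᵏ + μηᵏ)` and
`‖x^{k+1} - yᵏ‖ ≤ δ‖x^{k-1} - xᵏ‖`. -/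
def IsCDCA {n : ℕ} (f' : Euc n → Euc n) (h : Euc n → ℝ) (P : ℝ → Euc n → Euc n)
    (lam mu δ : ℝ) (x : ℕ → Euc n) : Prop :=
  ∀ k : ℕ, ∃ η ∈ SubdiffR h (x (k+1)), ∃ y,
    x (k+2) = P mu ((1 - mu*lam) • y - mu • f' y + (mu*lam) • x (k+1) + mu • η) ∧
    ‖x (k+2) - y‖ ≤ δ * ‖x k - x (k+1)‖

lemma hasDerivAt_line {n : ℕ} (f : Euc n → ℝ) (f' : Euc n → Euc n)
    (hf : ∀ z, HasGradientAt f (f' z) z) (a d : Euc n) (t : ℝ) :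
    HasDerivAt (fun s : ℝ => f (a + s • d)) ⟪f' (a + t • d), d⟫_ℝ t := by
  have hline : HasDerivAt (fun s : ℝ => a + s • d) d t := by
    simpa using ((hasDerivAt_id t).smul_const d).const_add a
  have := ((hf (a + t • d)).hasFDerivAt).comp_hasDerivAt t hline
  exact this

lemma convex_grad_ineq {n : ℕ} (f : Euc n → ℝ) (hconv : ConvexOn ℝ Set.univ f)
    (fb' : Euc n) (b : Euc n) (hgrad : HasGradientAt f fb' b) (z : Euc n) :
    f b + ⟪fb', z - b⟫_ℝ ≤ f z := by
  set φ : ℝ → ℝ := fun t => f (b + t • (z - b)) with hφdef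
  have hf' : ∀ u, u = b → HasGradientAt f fb' u := fun u hu => hu ▸ hgrad
  have hφ : HasDerivAt φ ⟪fb', z - b⟫_ℝ 0 := by
    have hline : HasDerivAt (fun s : ℝ => b + s • (z - b)) (z - b) 0 := by
      simpa using ((hasDerivAt_id (0:ℝ)).smul_const (z - b)).const_add b
    have h0 : b + (0:ℝ) • (z - b) = b := by simp
    have := ((hf' _ h0).hasFDerivAt).comp_hasDerivAt 0 hline
    exact this
  have htend : Tendsto (slope φ 0) (𝓝[>] 0) (𝓝 ⟪fb', z - b⟫_ℝ) :=
    (hasDerivAt_iff_tendsto_slope.mp hφ).mono_left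
      (nhdsWithin_mono _ (fun x hx => ne_of_gt hx))
  have hbound : ∀ᶠ t in 𝓝[>] (0:ℝ), slope φ 0 t ≤ f z - f b := by
    filter_upwards [Ioc_mem_nhdsGT_of_mem (by constructor <;> norm_num : (0:ℝ) ∈ Ico (0:ℝ) 1)]
      with t ht
    have hco : b + t • (z - b) = (1 - t) • b + t • z := by module
    have hcv := hconv.2 (mem_univ b) (mem_univ z) (by linarith [ht.2] : (0:ℝ) ≤ 1 - t)
      ht.1.le (by ring)
    have hφt : φ t ≤ (1 - t) * f b + t * f z := by rw [hφdef]; simp only; rw [hco]; exact hcv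
    have hφ0 : φ 0 = f b := by simp [hφdef]
    rw [slope_def_field, hφ0, sub_zero, div_le_iff₀ ht.1]
    nlinarith [hφt]
  have := le_of_tendsto htend hbound
  linarith

lemma hasGradient_inner {n : ℕ} (c : Euc n) (z : Euc n) :
    HasGradientAt (fun w : Euc n => ⟪c, w⟫_ℝ) c z := by
  rw [hasGradientAt_iff_hasFDerivAt]
  exact (InnerProductSpace.toDual ℝ (Euc n) c).hasFDerivAt

lemma descent {n : ℕ} (f : Euc n → ℝ) (f' : Euc n → Euc n) (L : ℝ) (hL : 0 < L)
    (hgrad : ∀ z, HasGradientAt f (f' z) z)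
    (hlip : ∀ z w, ‖f' z - f' w‖ ≤ L * ‖z - w‖) (a b : Euc n) :
    f b ≤ f a + ⟪f' a, b - a⟫_ℝ + L / 2 * ‖b - a‖ ^ 2 := by
  have hcont : Continuous f' := by
    have : LipschitzWith (Real.toNNReal L) f' := by
      apply LipschitzWith.of_dist_le_mul
      intro z w
      calc dist (f' z) (f' w) = ‖f' z - f' w‖ := dist_eq_norm _ _
        _ ≤ L * ‖z - w‖ := hlip z w
        _ ≤ Real.toNNReal L * dist z w := by
            rw [dist_eq_norm]
            exact mul_le_mul_of_nonneg_right (Real.le_coe_toNNReal L) (norm_nonneg _)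
    exact this.continuous
  set φ := fun t : ℝ => f (a + t • (b - a)) with hφdef
  set I := fun t : ℝ => ⟪f' (a + t • (b - a)), b - a⟫_ℝ with hIdef
  have hIc : Continuous I := by
    apply Continuous.inner
    · exact hcont.comp (continuous_const.add (continuous_id'.smul continuous_const))
    · exact continuous_const
  have hφd : ∀ t ∈ Set.uIcc (0:ℝ) 1, HasDerivAt φ (I t) t :=
    fun t _ => hasDerivAt_line f f' hgrad a (b - a) t
  have heq : ∫ t in (0:ℝ)..1, I t = φ 1 - φ 0 :=
    intervalIntegral.integral_eq_sub_of_hasDerivAt hφd (hIc.intervalIntegrable 0 1)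
  have hφ1 : φ 1 = f b := by simp [hφdef]
  have hφ0 : φ 0 = f a := by simp [hφdef]
  have hint2 : IntervalIntegrable (fun t : ℝ => L * ‖b - a‖ ^ 2 * t) MeasureTheory.volume 0 1 :=
    Continuous.intervalIntegrable (continuous_const.mul continuous_id') 0 1
  have hint3 : IntervalIntegrable (fun t : ℝ => ⟪f' a, b - a⟫_ℝ + L * ‖b - a‖ ^ 2 * t)
      MeasureTheory.volume 0 1 :=
    Continuous.intervalIntegrable (continuous_const.add (continuous_const.mul continuous_id')) 0 1
  have hmono : ∫ t in (0:ℝ)..1, I t ≤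
      ∫ t in (0:ℝ)..1, (⟪f' a, b - a⟫_ℝ + L * ‖b - a‖ ^ 2 * t) := by
    apply intervalIntegral.integral_mono_on (by norm_num) (hIc.intervalIntegrable 0 1) hint3
    intro t ht
    have h1 : I t - ⟪f' a, b - a⟫_ℝ = ⟪f' (a + t • (b - a)) - f' a, b - a⟫_ℝ := by
      rw [inner_sub_left]
    have h2 : ⟪f' (a + t • (b - a)) - f' a, b - a⟫_ℝ ≤ ‖f' (a + t • (b - a)) - f' a‖ * ‖b - a‖ :=
      real_inner_le_norm _ _
    have h3 : ‖f' (a + t • (b - a)) - f' a‖ ≤ L * (t * ‖b - a‖) := by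
      have := hlip (a + t • (b - a)) a
      simpa [norm_smul, abs_of_nonneg ht.1] using this
    have hmul : ‖f' (a + t • (b - a)) - f' a‖ * ‖b - a‖ ≤ L * (t * ‖b - a‖) * ‖b - a‖ :=
      mul_le_mul_of_nonneg_right h3 (norm_nonneg (b - a))
    have hring : L * (t * ‖b - a‖) * ‖b - a‖ = L * ‖b - a‖ ^ 2 * t := by ring
    linarith [h1, h2, hmul]
  have hrhs : ∫ t in (0:ℝ)..1, (⟪f' a, b - a⟫_ℝ + L * ‖b - a‖ ^ 2 * t)
      = ⟪f' a, b - a⟫_ℝ + L / 2 * ‖b - a‖ ^ 2 := by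
    rw [intervalIntegral.integral_add intervalIntegrable_const hint2]
    have hcm : ∫ x in (0:ℝ)..1, L * ‖b - a‖ ^ 2 * x
        = (L * ‖b - a‖ ^ 2) * ∫ x in (0:ℝ)..1, x := intervalIntegral.integral_const_mul _ _
    simp only [intervalIntegral.integral_const, smul_eq_mul, hcm, integral_id]
    norm_num
    ring
  rw [hrhs] at hmono
  rw [heq, hφ1, hφ0] at hmono
  linarith

lemma cocoercive {n : ℕ} (f : Euc n → ℝ) (f' : Euc n → Euc n) (L : ℝ) (hL : 0 < L)
    (hconv : ConvexOn ℝ Set.univ f)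
    (hgrad : ∀ z, HasGradientAt f (f' z) z)
    (hlip : ∀ z w, ‖f' z - f' w‖ ≤ L * ‖z - w‖) (a b : Euc n) :
    1 / L * ‖f' a - f' b‖ ^ 2 ≤ ⟪f' a - f' b, a - b⟫_ℝ := by
  have key : ∀ u v : Euc n, 1 / (2 * L) * ‖f' u - f' v‖ ^ 2 ≤ f u - f v - ⟪f' v, u - v⟫_ℝ := by
    intro u v
    set F := fun z : Euc n => f z - ⟪f' v, z⟫_ℝ with hFdef
    set F' := fun z : Euc n => f' z - f' v with hF'def
    have hFgrad : ∀ z, HasGradientAt F (F' z) z := by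
      intro z
      rw [hasGradientAt_iff_hasFDerivAt]
      have h1 := (hgrad z).hasFDerivAt
      have h2 := (hasGradient_inner (f' v) z).hasFDerivAt
      have h3 := h1.sub h2
      rw [show F' z = f' z - f' v from rfl, map_sub]
      exact h3
    have hFlip : ∀ z w, ‖F' z - F' w‖ ≤ L * ‖z - w‖ := by
      intro z w
      simpa [hF'def, sub_sub_sub_cancel_right] using hlip z w
    have hmin : ∀ z, F v ≤ F z := by
      intro z
      have hci := convex_grad_ineq f hconv (f' v) v (hgrad v) z
      have hir : ⟪f' v, z⟫_ℝ - ⟪f' v, v⟫_ℝ = ⟪f' v, z - v⟫_ℝ := (inner_sub_right _ _ _).symm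
      simp only [hFdef]
      linarith
    have hd := descent F F' L hL hFgrad hFlip u (u - (1 / L) • F' u)
    have hv := hmin (u - (1 / L) • F' u)
    have hin : ⟪F' u, u - (1 / L) • F' u - u⟫_ℝ = -(1 / L) * ‖F' u‖ ^ 2 := by
      have : u - (1 / L) • F' u - u = -((1 / L) • F' u) := by abel
      rw [this, inner_neg_right, real_inner_smul_right, real_inner_self_eq_norm_sq]
      ring
    have hnr : ‖u - (1 / L) • F' u - u‖ ^ 2 = (1 / L) ^ 2 * ‖F' u‖ ^ 2 := by
      have : u - (1 / L) • F' u - u = -((1 / L) • F' u) := by abel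
      rw [this, norm_neg, norm_smul, Real.norm_eq_abs, mul_pow, sq_abs]
    rw [hin, hnr] at hd
    have hcalc : F v ≤ F u - 1 / (2 * L) * ‖F' u‖ ^ 2 := by
      have hLne : L ≠ 0 := ne_of_gt hL
      have : ⟪F' u, u - (1/L) • F' u - u⟫_ℝ = ⟪F' u, u - (1/L) • F' u - u⟫_ℝ := rfl
      calc F v ≤ F u + (-(1 / L) * ‖F' u‖ ^ 2) + L / 2 * ((1 / L) ^ 2 * ‖F' u‖ ^ 2) := le_trans hv hd
        _ = F u - 1 / (2 * L) * ‖F' u‖ ^ 2 := by field_simp; ring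
    have hFu : F u = f u - ⟪f' v, u⟫_ℝ := rfl
    have hFv : F v = f v - ⟪f' v, v⟫_ℝ := rfl
    have hF'u : F' u = f' u - f' v := rfl
    rw [hFu, hFv, hF'u] at hcalc
    have hir : ⟪f' v, u⟫_ℝ - ⟪f' v, v⟫_ℝ = ⟪f' v, u - v⟫_ℝ := (inner_sub_right _ _ _).symm
    linarith
  have h1 := key a b
  have h2 := key b a
  have hns : ‖f' b - f' a‖ = ‖f' a - f' b‖ := norm_sub_rev _ _
  rw [hns] at h2
  have hexp : ⟪f' a - f' b, a - b⟫_ℝ =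
      (f a - f b - ⟪f' b, a - b⟫_ℝ) + (f b - f a - ⟪f' a, b - a⟫_ℝ) := by
    simp only [inner_sub_left, inner_sub_right]
    ring
  have : 1 / L * ‖f' a - f' b‖ ^ 2 = 1 / (2 * L) * ‖f' a - f' b‖ ^ 2 + 1 / (2 * L) * ‖f' a - f' b‖ ^ 2 := by
    field_simp
    ring
  linarith [hexp, h1, h2]

lemma subdiff_eq_grad {n : ℕ} (h : Euc n → ℝ) (u : Euc n) (hu' : Euc n)
    (hgrad : HasGradientAt h hu' u) (η : Euc n) (hη : η ∈ SubdiffR h u) : η = hu' := by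
  have key : ∀ d : Euc n, ⟪hu' - η, d⟫_ℝ = 0 := by
    intro d
    set φ := fun t : ℝ => h (u + t • d) - h u - t * ⟪η, d⟫_ℝ with hφdef
    have hφ0 : φ 0 = 0 := by simp [hφdef]
    have hφnn : ∀ t, 0 ≤ φ t := by
      intro t
      have h1 := hη (u + t • d)
      change h u + ⟪η, u + t • d - u⟫_ℝ ≤ h (u + t • d) at h1
      have h2 : u + t • d - u = t • d := by abel
      rw [h2] at h1
      rw [real_inner_smul_right] at h1
      simp only [hφdef]
      linarith
    have hmin : IsLocalMin φ 0 :=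
      Filter.Eventually.of_forall (fun t => le_of_eq_of_le hφ0 (hφnn t))
    have hd : HasDerivAt φ (⟪hu', d⟫_ℝ - ⟪η, d⟫_ℝ) 0 := by
      have hf' : ∀ z, z = u → HasGradientAt h hu' z := fun z hz => hz ▸ hgrad
      have hline : HasDerivAt (fun s : ℝ => u + s • d) d 0 := by
        simpa using ((hasDerivAt_id (0:ℝ)).smul_const d).const_add u
      have h0 : u + (0:ℝ) • d = u := by simp
      have hmain : HasDerivAt (fun t : ℝ => h (u + t • d)) ⟪hu', d⟫_ℝ 0 := by
        have := ((hf' _ h0).hasFDerivAt).comp_hasDerivAt 0 hline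
        exact this
      have := (hmain.sub_const (h u)).sub (hasDerivAt_mul_const ⟪η, d⟫_ℝ)
      exact this
    have := hmin.hasDerivAt_eq_zero hd
    rw [inner_sub_left]
    linarith [this]
  have h0 := key (hu' - η)
  rw [inner_self_eq_zero, sub_eq_zero] at h0
  exact h0.symm

lemma prox_subgrad {n : ℕ} (g : Euc n → EReal) (hgproper : ProperE g) (hgconv : ConvexEReal g)
    (mu : ℝ) (hmu : 0 < mu) (v p : Euc n)
    (hmin : ∀ y, g p + ((1/(2*mu) * ‖v - p‖^2 : ℝ) : EReal) ≤ g y + ((1/(2*mu) * ‖v - y‖^2 : ℝ) : EReal)) :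
    mu⁻¹ • (v - p) ∈ SubdiffE g p := by
  obtain ⟨hbot, x0, hx0⟩ := hgproper
  have hptop : g p ≠ ⊤ := by
    intro htop
    have h1 := hmin x0
    rw [htop] at h1
    have h2 : (⊤ : EReal) + ((1/(2*mu) * ‖v - p‖^2 : ℝ) : EReal) = ⊤ := EReal.top_add_coe _
    rw [h2, top_le_iff] at h1
    rw [(EReal.coe_toReal hx0 (hbot x0)).symm, ← EReal.coe_add] at h1
    exact EReal.coe_ne_top _ h1
  set a := (g p).toReal with ha
  have hgp : g p = (a : EReal) := (EReal.coe_toReal hptop (hbot p)).symm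
  intro z
  by_cases hz : g z = ⊤
  · rw [hz]; exact le_top
  set b := (g z).toReal with hb
  have hgz : g z = (b : EReal) := (EReal.coe_toReal hz (hbot z)).symm
  set c := 1/(2*mu) with hc
  have hcpos : 0 < c := by rw [hc]; positivity
  set D := c * ‖z - p‖^2 with hD
  have hDnn : 0 ≤ D := by rw [hD]; positivity
  have hstep : ∀ t : ℝ, 0 < t → t ≤ 1 → a + mu⁻¹ * ⟪v - p, z - p⟫_ℝ ≤ b + t * D := by
    intro t ht0 ht1
    have hyconv := hgconv p z (1-t) t (by linarith) ht0.le (by ring)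
    rw [hgp, hgz] at hyconv
    have hyconv' : g ((1-t) • p + t • z) ≤ (((1-t)*a + t*b : ℝ) : EReal) := by
      refine le_trans hyconv (le_of_eq ?_)
      push_cast
      rfl
    have hmin' := hmin ((1-t) • p + t • z)
    have hchain : g p + ((c * ‖v - p‖^2 : ℝ) : EReal) ≤
        ((((1-t)*a + t*b) + c * ‖v - ((1-t) • p + t • z)‖^2 : ℝ) : EReal) := by
      refine le_trans hmin' ?_
      rw [EReal.coe_add]
      exact add_le_add_left hyconv' _
    rw [hgp, ← EReal.coe_add, EReal.coe_le_coe_iff] at hchain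
    have hco : v - ((1-t) • p + t • z) = (v - p) - t • (z - p) := by module
    have hnorm : ‖v - ((1-t) • p + t • z)‖^2
        = ‖v - p‖^2 - 2*t*⟪v - p, z - p⟫_ℝ + t^2*‖z - p‖^2 := by
      rw [hco, norm_sub_sq_real, real_inner_smul_right, norm_smul, Real.norm_eq_abs,
        mul_pow, sq_abs]
      ring
    rw [hnorm] at hchain
    have h2c : mu⁻¹ = 2 * c := by rw [hc]; field_simp
    rw [h2c]
    have hmul : t * (a + 2*c*⟪v - p, z - p⟫_ℝ) ≤ t * (b + t * D) := by
      rw [hD]; nlinarith [hchain]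
    exact le_of_mul_le_mul_left hmul ht0
  have hfinal : a + mu⁻¹ * ⟪v - p, z - p⟫_ℝ ≤ b := by
    apply _root_.le_of_forall_pos_le_add
    intro ε hε
    set t := min 1 (ε / (D + 1)) with htdef
    have ht0 : 0 < t := lt_min one_pos (by positivity)
    have ht1 : t ≤ 1 := min_le_left _ _
    have h1 := hstep t ht0 ht1
    have htD : t * D ≤ ε := by
      have h2 : t ≤ ε / (D + 1) := min_le_right _ _
      have h3 : t * (D + 1) ≤ ε := by
        rw [← le_div_iff₀ (by positivity : (0:ℝ) < D + 1)]
        exact h2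
      nlinarith
    linarith
  rw [hgp, hgz, ← EReal.coe_add, EReal.coe_le_coe_iff]
  rw [real_inner_smul_left]
  exact hfinal

/-- For a cDCA sequence, if `h` is differentiable with `∇h`
`L_h`-Lipschitz on the convex hull of `{xᵏ : k ≥ -1}`, then for every `k ≥ 0` there is
`ξ^{k+1} ∈ ∂g(x^{k+1})` such that `w^{k+1} = ∇f(x^{k+1}) + ξ^{k+1} - ∇h(x^{k+1})` satisfies
`‖w^{k+1}‖ ≤ ((1-μλ)δ/μ)‖xᵏ - x^{k-1}‖ + (λ + L_h)‖x^{k+1} - xᵏ‖`.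
(Here `x 0 = x⁻¹` and `x (k+1) = xᵏ`.) -/
theorem stmt10 {n : ℕ}
    (f : Euc n → ℝ) (f' : Euc n → Euc n) (Lf : ℝ) (hLf : 0 < Lf)
    (hfconv : ConvexOn ℝ Set.univ f)
    (hfgrad : ∀ z, HasGradientAt f (f' z) z)
    (hflip : ∀ z w, ‖f' z - f' w‖ ≤ Lf * ‖z - w‖)
    (g : Euc n → EReal) (hgproper : ProperE g) (hgconv : ConvexEReal g)
    (hglsc : LowerSemicontinuous g)
    (h : Euc n → ℝ) (hhconv : ConvexOn ℝ Set.univ h)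
    (P : ℝ → Euc n → Euc n) (hP : IsProx g P)
    (lam δ mu tau : ℝ) (hlam : 0 < lam) (hδ : δ ∈ Set.Ioo 0 (2*lam/Lf))
    (hmu : mu = 2/(2*lam + Lf)) (htau : tau = Lf^2 * δ^2 / (8*lam))
    (x : ℕ → Euc n) (hx : IsCDCA f' h P lam mu δ x)
    (h' : Euc n → Euc n) (hhgrad : ∀ z, HasGradientAt h (h' z) z)
    (Lh : ℝ) (hhlip : ∀ a ∈ convexHull ℝ (Set.range x), ∀ b ∈ convexHull ℝ (Set.range x),
      ‖h' a - h' b‖ ≤ Lh * ‖a - b‖) :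
    ∀ k : ℕ, ∃ ξ ∈ SubdiffE g (x (k+2)),
      ‖f' (x (k+2)) + ξ - h' (x (k+2))‖ ≤
        ((1 - mu*lam) * δ / mu) * ‖x (k+1) - x k‖ + (lam + Lh) * ‖x (k+2) - x (k+1)‖ := by
  intro k
  obtain ⟨η, hη, y, hstep, hbound⟩ := hx k
  have hsum : 0 < 2*lam + Lf := by linarith
  have hmupos : 0 < mu := by rw [hmu]; positivity
  have hmune : mu ≠ 0 := ne_of_gt hmupos
  have hkey : mu * (2*lam + Lf) = 2 := by rw [hmu]; field_simp
  have h1ml : 1 - mu*lam = mu * Lf / 2 := by nlinarith [hkey]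
  have h1mlpos : 0 < 1 - mu*lam := by rw [h1ml]; positivity
  set p := x (k+2) with hp
  set xk := x (k+1) with hxk
  set v := (1 - mu*lam) • y - mu • f' y + (mu*lam) • xk + mu • η with hv
  have hmin := (hP mu hmupos v p).mp hstep.symm
  refine ⟨mu⁻¹ • (v - p), prox_subgrad g hgproper hgconv mu hmupos v p hmin, ?_⟩
  have hηeq : η = h' xk := subdiff_eq_grad h xk (h' xk) (hhgrad xk) η hη
  set A := mu⁻¹ • (((1 - mu*lam) • y - mu • f' y) - ((1 - mu*lam) • p - mu • f' p)) with hA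
  set B := lam • (xk - p) with hB
  set C := h' xk - h' p with hC
  have hid : f' p + mu⁻¹ • (v - p) - h' p = A + B + C := by
    rw [hA, hB, hC, hv, hηeq]
    match_scalars <;> (field_simp; try ring)
  -- bound on A
  have hco := cocoercive f f' Lf hLf hfconv hfgrad hflip y p
  have hTsq : ‖((1 - mu*lam) • y - mu • f' y) - ((1 - mu*lam) • p - mu • f' p)‖ ^ 2
      ≤ ((1 - mu*lam) * ‖y - p‖) ^ 2 := by
    have hre : ((1 - mu*lam) • y - mu • f' y) - ((1 - mu*lam) • p - mu • f' p)
        = (1 - mu*lam) • (y - p) - mu • (f' y - f' p) := by module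
    rw [hre, norm_sub_sq_real, real_inner_smul_left, real_inner_smul_right, norm_smul, norm_smul,
      Real.norm_eq_abs, Real.norm_eq_abs, abs_of_pos hmupos, abs_of_pos h1mlpos]
    have hsym : ⟪y - p, f' y - f' p⟫_ℝ = ⟪f' y - f' p, y - p⟫_ℝ := real_inner_comm _ _
    have hmm : 2 * mu * (1 - mu*lam) = mu^2 * Lf := by rw [h1ml]; ring
    have hmul := mul_le_mul_of_nonneg_left hco
      (by positivity : (0:ℝ) ≤ 2 * mu * (1 - mu*lam))
    have hLfne : Lf ≠ 0 := ne_of_gt hLf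
    have hfr : 2 * mu * (1 - mu*lam) * (1 / Lf * ‖f' y - f' p‖ ^ 2) = mu^2 * ‖f' y - f' p‖^2 := by
      rw [h1ml]; field_simp
    rw [hfr] at hmul
    rw [hsym]
    nlinarith [hmul]
  have hT : ‖((1 - mu*lam) • y - mu • f' y) - ((1 - mu*lam) • p - mu • f' p)‖
      ≤ (1 - mu*lam) * ‖y - p‖ := by
    have h1 := Real.sqrt_le_sqrt hTsq
    rwa [Real.sqrt_sq (norm_nonneg _), Real.sqrt_sq (by positivity)] at h1
  have hAle : ‖A‖ ≤ mu⁻¹ * ((1 - mu*lam) * (δ * ‖x k - xk‖)) := by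
    rw [hA, norm_smul, Real.norm_eq_abs, abs_of_pos (by positivity : (0:ℝ) < mu⁻¹)]
    have hyp : ‖y - p‖ ≤ δ * ‖x k - xk‖ := by
      rw [norm_sub_rev]; exact hbound
    have h2 : ‖((1 - mu*lam) • y - mu • f' y) - ((1 - mu*lam) • p - mu • f' p)‖
        ≤ (1 - mu*lam) * (δ * ‖x k - xk‖) :=
      le_trans hT (by
        exact mul_le_mul_of_nonneg_left hyp h1mlpos.le)
    exact mul_le_mul_of_nonneg_left h2 (by positivity)
  have hBle : ‖B‖ ≤ lam * ‖p - xk‖ := by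
    rw [hB, norm_smul, Real.norm_eq_abs, abs_of_pos hlam, norm_sub_rev]
  have hxmem : ∀ j, x j ∈ convexHull ℝ (Set.range x) :=
    fun j => subset_convexHull _ _ ⟨j, rfl⟩
  have hCle : ‖C‖ ≤ Lh * ‖p - xk‖ := by
    rw [hC]
    have := hhlip xk (hxmem (k+1)) p (hxmem (k+2))
    rwa [norm_sub_rev xk p] at this
  rw [hid]
  calc ‖A + B + C‖ ≤ ‖A‖ + ‖B‖ + ‖C‖ := norm_add₃_le
    _ ≤ mu⁻¹ * ((1 - mu*lam) * (δ * ‖x k - xk‖)) + lam * ‖p - xk‖ + Lh * ‖p - xk‖ := by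
        gcongr
    _ = ((1 - mu*lam) * δ / mu) * ‖x k - xk‖ + (lam + Lh) * ‖p - xk‖ := by
        field_simp; ring
    _ = ((1 - mu*lam) * δ / mu) * ‖xk - x k‖ + (lam + Lh) * ‖p - xk‖ := by
        rw [norm_sub_rev]
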